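/- Let p, q be coprime integers and r, s integers with pr + qs = 1. Then there do not exist real numbers u, v such that cos(r v) = 0, cos(s u) = 0, cos((q − r) v) = 0, and cos((s + p) u) = 0 simultaneously. -/

import Mathlib

open Real

/-- If `cos (m x) = 0` and `cos (n x) = 0` then `n(2a+1) = m(2b+1)` for some integers. -/
lemma aux_cos (m n : ℤ) (x : ℝ) (hm : Real.cos ((m : ℝ) * x) = 0)
    (hn : Real.cos ((n : ℝ) * x) = 0) :
    ∃ a b : ℤ, n * (2 * a + 1) = m * (2 * b + 1) := by
  rw [Real.cos_eq_zero_iff] at hm hn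
  obtain ⟨a, ha⟩ := hm
  obtain ⟨b, hb⟩ := hn
  refine ⟨a, b, ?_⟩
  have hhalf : (π / 2 : ℝ) ≠ 0 := by positivity
  have key : ((n : ℝ) * (2 * a + 1)) * (π / 2) = ((m : ℝ) * (2 * b + 1)) * (π / 2) := by
    have e : (n : ℝ) * ((2 * a + 1) * π / 2) = (m : ℝ) * ((2 * b + 1) * π / 2) := by
      rw [← ha, ← hb]; ring
    calc ((n : ℝ) * (2 * a + 1)) * (π / 2) = (n : ℝ) * ((2 * a + 1) * π / 2) := by ring
      _ = (m : ℝ) * ((2 * b + 1) * π / 2) := e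
      _ = ((m : ℝ) * (2 * b + 1)) * (π / 2) := by ring
  have h2 : ((n : ℝ) * (2 * a + 1)) = ((m : ℝ) * (2 * b + 1)) :=
    mul_right_cancel₀ hhalf key
  exact_mod_cast h2

lemma aux_odd (m n : ℤ) (hc : IsCoprime m n) (a b : ℤ)
    (h : n * (2 * a + 1) = m * (2 * b + 1)) : Odd m ∧ Odd n := by
  constructor
  · have hd : m ∣ 2 * a + 1 := by
      have : m ∣ n * (2 * a + 1) := ⟨2 * b + 1, h⟩
      exact (IsCoprime.dvd_of_dvd_mul_left hc this)
    rcases hd with ⟨c, hc'⟩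
    rcases Int.even_or_odd m with he | ho
    · exfalso
      have hev : Even (m * c) := he.mul_right c
      rw [← hc'] at hev
      rcases hev with ⟨t, ht⟩; omega
    · exact ho
  · have hd : n ∣ 2 * b + 1 := by
      have : n ∣ m * (2 * b + 1) := ⟨2 * a + 1, h.symm⟩
      exact (IsCoprime.dvd_of_dvd_mul_left hc.symm this)
    rcases hd with ⟨c, hc'⟩
    rcases Int.even_or_odd n with he | ho
    · exfalso
      have hev : Even (n * c) := he.mul_right c
      rw [← hc'] at hev
      rcases hev with ⟨t, ht⟩; omega
    · exact ho

/-- **No simultaneous vanishing of the four cosines.**  If `p, q` are coprime integers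
and `r, s` are integers with `pr + qs = 1`, then there are no real numbers `u, v` with
`cos(rv) = cos(su) = cos((q−r)v) = cos((s+p)u) = 0` simultaneously. -/
theorem no_common_cosine_zero (p q r s : ℤ)
    (hcop : IsCoprime p q) (h : p * r + q * s = 1) :
    ¬ ∃ u v : ℝ,
        Real.cos ((r : ℝ) * v) = 0 ∧
        Real.cos ((s : ℝ) * u) = 0 ∧
        Real.cos (((q : ℝ) - (r : ℝ)) * v) = 0 ∧
        Real.cos (((s : ℝ) + (p : ℝ)) * u) = 0 := by
  rintro ⟨u, v, h1, h2, h3, h4⟩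
  -- coprimality facts
  have hrq : IsCoprime r q := ⟨p, s, by linarith⟩
  have hr : IsCoprime r (q - r) := by
    have := hrq.add_mul_left_right (-1)
    simpa [sub_eq_add_neg, mul_comm] using this
  have hsp : IsCoprime s p := ⟨q, r, by linarith⟩
  have hs : IsCoprime s (s + p) := by
    have := (hsp.symm.add_mul_left_left 1).symm
    simpa [add_comm] using this
  have h3' : Real.cos (((q - r : ℤ) : ℝ) * v) = 0 := by push_cast; exact h3
  have h4' : Real.cos (((s + p : ℤ) : ℝ) * u) = 0 := by push_cast; exact h4
  obtain ⟨a, b, hab⟩ := aux_cos r (q - r) v h1 h3'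
  obtain ⟨c, d, hcd⟩ := aux_cos s (s + p) u h2 h4'
  obtain ⟨hro, hqro⟩ := aux_odd r (q - r) hr a b hab
  obtain ⟨hso, hspo⟩ := aux_odd s (s + p) hs c d hcd
  -- then p and q are both even, contradicting coprimality
  have hgcd := Int.isCoprime_iff_gcd_eq_one.mp hcop
  rcases hro with ⟨k1, hk1⟩
  rcases hqro with ⟨k2, hk2⟩
  rcases hso with ⟨k3, hk3⟩
  rcases hspo with ⟨k4, hk4⟩
  have h2p : (2 : ℤ) ∣ p := ⟨k4 - k3, by omega⟩
  have h2q : (2 : ℤ) ∣ q := ⟨k1 + k2 + 1, by omega⟩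
  have hdg : (2 : ℤ) ∣ Int.gcd p q := Int.dvd_coe_gcd h2p h2q
  rw [hgcd] at hdg
  omega
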